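/- Any locally deterministic theory satisfies (the fine-grained version of) Local Causality: conditioning on any further event beyond the thick-slice specification leaves the probability of a complete state of a shielded region unchanged. Precisely: suppose T is locally deterministic, sol ω ∈ T for every ω, R, R' ⊆ M are bounded, R' is shielded by R at time t, t' < t < R, g : M → S, C is the thick-slice specification event for (R, t', t, g), f : M → S, A = {ω ∈ Ω : ∀ p ∈ R', sol ω p = f p}, A and C are measurable, W is any measurable event, and μ(W ∩ C) > 0. Then μ[A | W ∩ C] = μ[A | C]. -/

import Mathlib

open MeasureTheory ProbabilityTheory

noncomputable section

/-- Space: three-dimensional Euclidean space. -/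
abbrev SpaceE : Type := EuclideanSpace ℝ (Fin 3)

/-- Spacetime: time × space. -/
abbrev SpacetimeM : Type := ℝ × SpaceE

/-- The cone slice Σ(R, t₀). -/
def coneSlice (R : Set SpacetimeM) (t₀ : ℝ) : Set SpaceE :=
  {x | ∃ p ∈ R, ‖x - p.2‖ ≤ |p.1 - t₀|}

/-- Local determinism of a theory `T`. -/
def LocallyDeterministic {S : Type*} (T : Set (SpacetimeM → S)) : Prop :=
  ∀ R : Set SpacetimeM, Bornology.IsBounded R →
    ∀ t₀ : ℝ, ((∀ p ∈ R, t₀ < p.1) ∨ (∀ p ∈ R, p.1 < t₀)) →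
      ∀ u ∈ T, ∀ v ∈ T,
        (∀ x ∈ coneSlice R t₀, u (t₀, x) = v (t₀, x)) →
        ∀ p ∈ R, u p = v p

/-- `R'` is shielded by `R` at time `t`: `t` lies below `R'`, and every point of
`R'` lies in the causal past of some point of `R`. -/
def ShieldedBy (R' R : Set SpacetimeM) (t : ℝ) : Prop :=
  (∀ p ∈ R', t < p.1) ∧ ∀ p ∈ R', ∃ q ∈ R, q.1 - p.1 ≥ ‖q.2 - p.2‖

/-- The thick-slice specification event: the solution realised by `ω` agrees with
`g` on the thick slice C(Σ(R,t), Σ(R,t')) of the past light cone of `R`. -/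
def thickSliceEvent {Ω : Type*} {S : Type*} (sol : Ω → SpacetimeM → S)
    (R : Set SpacetimeM) (t' t : ℝ) (g : SpacetimeM → S) : Set Ω :=
  {ω | ∀ s ∈ Set.Icc t' t, ∀ x ∈ coneSlice R s, sol ω (s, x) = g (s, x)}

/-- Fine-grained half of Theorem 2: any locally deterministic theory satisfies
Local Causality: conditioning on any further event beyond the thick-slice
specification leaves the probability of a complete state of a shielded region
unchanged. -/
theorem locallyDeterministic_localCausality_fineGrained
    {Ω : Type*} [MeasurableSpace Ω] (μ : Measure Ω) [IsProbabilityMeasure μ]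
    {S : Type*} (T : Set (SpacetimeM → S)) (hT : LocallyDeterministic T)
    (sol : Ω → SpacetimeM → S) (hsol : ∀ ω, sol ω ∈ T)
    (R R' : Set SpacetimeM) (hR : Bornology.IsBounded R)
    (hR' : Bornology.IsBounded R')
    (t t' : ℝ) (hshield : ShieldedBy R' R t) (ht't : t' < t)
    (htR : ∀ p ∈ R, t < p.1)
    (g : SpacetimeM → S) (C : Set Ω) (hC : C = thickSliceEvent sol R t' t g)
    (f : SpacetimeM → S) (A : Set Ω) (hA : A = {ω | ∀ p ∈ R', sol ω p = f p})
    (hAm : MeasurableSet A) (hCm : MeasurableSet C)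
    (W : Set Ω) (hWm : MeasurableSet W)
    (hWCpos : 0 < μ (W ∩ C)) :
    μ[A | W ∩ C] = μ[A | C] := by
  -- Key: any two solutions in C agree on R'
  have key : ∀ ω ∈ C, ∀ ω' ∈ C, ∀ p ∈ R', sol ω p = sol ω' p := by
    intro ω hω ω' hω' p hp
    subst hC
    refine hT R' hR' t (Or.inl hshield.1) (sol ω) (hsol ω) (sol ω') (hsol ω') ?_ p hp
    intro x hx
    obtain ⟨q, hq, hqx⟩ := hx
    obtain ⟨r, hr, hrq⟩ := hshield.2 q hq
    have hqt : t < q.1 := hshield.1 q hq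
    have hrt : t < r.1 := htR r hr
    have hxR : x ∈ coneSlice R t := by
      refine ⟨r, hr, ?_⟩
      have h1 : ‖x - r.2‖ ≤ ‖x - q.2‖ + ‖q.2 - r.2‖ := norm_sub_le_norm_sub_add_norm_sub x q.2 r.2
      have h2 : ‖q.2 - r.2‖ = ‖r.2 - q.2‖ := norm_sub_rev _ _
      have h3 : |q.1 - t| = q.1 - t := abs_of_pos (by linarith)
      have h4 : |r.1 - t| = r.1 - t := abs_of_pos (by linarith)
      rw [h4]; rw [h3] at hqx
      linarith [hrq, h1, h2 ▸ h1]
    have ht1 : t ∈ Set.Icc t' t := ⟨le_of_lt ht't, le_refl t⟩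
    rw [hω t ht1 x hxR, hω' t ht1 x hxR]
  -- C ⊆ A or C ∩ A = ∅
  have hCne : (W ∩ C).Nonempty := by
    by_contra h
    rw [Set.not_nonempty_iff_eq_empty] at h
    simp [h] at hWCpos
  obtain ⟨ω₀, hω₀W, hω₀C⟩ := hCne
  have hμC : μ C ≠ 0 := by
    intro h
    have : μ (W ∩ C) ≤ μ C := measure_mono Set.inter_subset_right
    rw [h] at this
    exact absurd (le_antisymm this zero_le) (ne_of_gt hWCpos)
  have hμWC : μ (W ∩ C) ≠ 0 := ne_of_gt hWCpos
  by_cases hω₀A : ω₀ ∈ A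
  · -- C ⊆ A
    have hCA : C ⊆ A := by
      intro ω hω
      rw [hA]
      intro p hp
      rw [key ω hω ω₀ hω₀C p hp]
      exact (hA ▸ hω₀A) p hp
    have e1 : A ∩ (W ∩ C) = W ∩ C := Set.inter_eq_right.mpr fun ω hω => hCA hω.2
    have e2 : A ∩ C = C := Set.inter_eq_right.mpr hCA
    rw [cond_apply (hWm.inter hCm), cond_apply hCm, Set.inter_comm (W ∩ C) A,
      Set.inter_comm C A, e1, e2,
      ENNReal.inv_mul_cancel hμWC (measure_ne_top μ _),
      ENNReal.inv_mul_cancel hμC (measure_ne_top μ _)]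
  · -- C ∩ A = ∅
    have hCA : C ∩ A = ∅ := by
      ext ω
      simp only [Set.mem_inter_iff, Set.mem_empty_iff_false, iff_false, not_and]
      intro hω hωA
      apply hω₀A
      rw [hA]
      intro p hp
      rw [key ω₀ hω₀C ω hω p hp]
      exact (hA ▸ hωA) p hp
    have e1 : (W ∩ C) ∩ A = ∅ := by
      apply Set.subset_empty_iff.mp
      intro x hx
      exact hCA ▸ (⟨hx.1.2, hx.2⟩ : x ∈ C ∩ A)
    rw [cond_apply (hWm.inter hCm), cond_apply hCm, e1, hCA]
    simp
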